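/- In the game of Infinite Hex, not both players can have winning paths in the same position: if a position contains a Red winning Z-chain then it contains no Blue winning Z-chain. -/

import Mathlib

/-- Hexagonal adjacency on the grid model of the Hex board: the six neighbours of a
tile are obtained by the displacements `(±1,0)`, `(0,±1)`, `(1,-1)` and `(-1,1)`. -/
def hexAdj (p q : ℤ × ℤ) : Prop :=
  (p.1 - q.1, p.2 - q.2) ∈
    ({(1, 0), (-1, 0), (0, 1), (0, -1), (1, -1), (-1, 1)} : Set (ℤ × ℤ))

/-- A `Z`-chain for the player `red` in a position `c` of the Infinite Hex board
(tiles in bijection with `ℤ × ℤ`; `some true` = Red, `some false` = Blue): a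
bi-infinite sequence of tiles of that player's colour, consecutive ones hex-adjacent. -/
def IsZChain (c : ℤ × ℤ → Option Bool) (red : Bool) (r : ℤ → ℤ × ℤ) : Prop :=
  (∀ n : ℤ, c (r n) = some red) ∧ ∀ n : ℤ, hexAdj (r n) (r (n + 1))

/-- The chain `r` of player `red` is winning with respect to the reference tile `h₀`:
eventually its positive part lies in the appropriate quadrant (NE for Red, NW for Blue)
and its negative part lies in the opposite quadrant (SW for Red, SE for Blue). -/
def WinningWrt (red : Bool) (r : ℤ → ℤ × ℤ) (h₀ : ℤ × ℤ) : Prop :=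
  ∃ M : ℕ, ∀ m : ℕ, M ≤ m →
    (if red then
      (h₀.1 < (r m).1 ∧ h₀.2 < (r m).2) ∧
      ((r (-(m : ℤ))).1 < h₀.1 ∧ (r (-(m : ℤ))).2 < h₀.2)
    else
      ((r m).1 < h₀.1 ∧ h₀.2 < (r m).2) ∧
      (h₀.1 < (r (-(m : ℤ))).1 ∧ (r (-(m : ℤ))).2 < h₀.2))

/-- A chain is winning if it is winning with respect to every choice of reference tile. -/
def WinningZChain (c : ℤ × ℤ → Option Bool) (red : Bool) (r : ℤ → ℤ × ℤ) : Prop :=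
  IsZChain c red r ∧ ∀ h₀ : ℤ × ℤ, WinningWrt red r h₀

/-! ### Auxiliary machinery for the crossing-parity argument -/

private lemma zmod2_add_self : ∀ x : ZMod 2, x + x = 0 := by decide

private lemma zmod2_eq_of_add_eq_zero : ∀ x y : ZMod 2, x + y = 0 → x = y := by decide

/-- `crossP r a b n` : the red edge from `r n` to `r (n+1)` crosses the horizontal
slit at height `b - 1/2` lying (weakly) to the right of the vertex `(a, b)`. -/
abbrev crossP (r : ℤ → ℤ × ℤ) (a b n : ℤ) : Prop :=
  (((r n).2 = b - 1 ∧ (r (n+1)).2 = b) ∨ ((r n).2 = b ∧ (r (n+1)).2 = b - 1)) ∧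
    2 * a ≤ (r n).1 + (r (n+1)).1

/-- Parity (in `ZMod 2`) of the number of crossings, counted inside the window
`[-N, N-1]` of path indices. -/
noncomputable def parityAt (r : ℤ → ℤ × ℤ) (a b : ℤ) (N : ℕ) : ZMod 2 :=
  ∑ n ∈ Finset.Icc (-(N:ℤ)) ((N:ℤ) - 1), if crossP r a b n then 1 else 0

/-- Telescoping sum mod 2 over an integer interval. -/
private lemma telIcc (g : ℤ → ZMod 2) :
    ∀ (m : ℕ) (lo : ℤ),
      (∑ n ∈ Finset.Icc lo (lo + (m:ℤ) - 1), (g (n+1) + g n)) = g (lo + m) + g lo := by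
  intro m
  induction m with
  | zero =>
    intro lo
    rw [show lo + ((0:ℕ):ℤ) - 1 = lo - 1 by push_cast; ring,
        Finset.Icc_eq_empty (by omega), Finset.sum_empty,
        show lo + ((0:ℕ):ℤ) = lo by push_cast; ring]
    exact (zmod2_add_self (g lo)).symm
  | succ m ih =>
    intro lo
    have hIns : Finset.Icc lo (lo + ((m+1:ℕ):ℤ) - 1)
        = insert (lo + (m:ℤ)) (Finset.Icc lo (lo + (m:ℤ) - 1)) := by
      ext x
      simp only [Finset.mem_Icc, Finset.mem_insert]
      omega
    rw [hIns, Finset.sum_insert (by simp only [Finset.mem_Icc]; omega), ih lo,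
        show lo + ((m+1:ℕ):ℤ) = lo + (m:ℤ) + 1 by push_cast; ring]
    linear_combination (zmod2_add_self (g (lo + (m:ℤ))) : _)

/-- The key local (pointwise) lemma: for hex-adjacent consecutive red tiles that avoid
the two (non-red) tiles `(a,b)` and `(a', b-1)` (with `a' ∈ {a, a+1}`), the edge
crosses exactly one of the two slits iff the membership indicator of the half-row
`{(x, b-1) : x ≥ a'}` flips. -/
private lemma cross_point (r : ℤ → ℤ × ℤ) (a b a' n : ℤ) (ha' : a' = a ∨ a' = a + 1)
    (hadj : hexAdj (r n) (r (n + 1)))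
    (hv1 : ¬((r n).1 = a ∧ (r n).2 = b))
    (hv2 : ¬((r (n+1)).1 = a ∧ (r (n+1)).2 = b))
    (hu1 : ¬((r n).1 = a' ∧ (r n).2 = b - 1))
    (hu2 : ¬((r (n+1)).1 = a' ∧ (r (n+1)).2 = b - 1)) :
    ((if crossP r a b n then (1 : ZMod 2) else 0) +
        (if crossP r a' (b - 1) n then 1 else 0)) =
      ((if ((r (n+1)).2 = b - 1 ∧ a' ≤ (r (n+1)).1) then (1 : ZMod 2) else 0) +
        (if ((r n).2 = b - 1 ∧ a' ≤ (r n).1) then 1 else 0)) := by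
  simp only [hexAdj, Set.mem_insert_iff, Set.mem_singleton_iff, Prod.mk.injEq] at hadj
  simp only [crossP]
  split_ifs with h1 h2 h3 h4 <;>
    first
      | decide
      | (exfalso; omega)

/-- Parity does not depend on the window size, once the window is large enough. -/
private lemma parity_stab (r : ℤ → ℤ × ℤ) (a b : ℤ) (N M : ℕ) (hNM : N ≤ M)
    (hrow : ∀ n : ℤ, (((N:ℤ) ≤ n) ∨ (n ≤ -(N:ℤ))) → ¬((r n).2 = b - 1 ∨ (r n).2 = b)) :
    parityAt r a b N = parityAt r a b M := by
  unfold parityAt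
  apply Finset.sum_subset
  · intro x hx
    simp only [Finset.mem_Icc] at hx ⊢
    omega
  · intro x hx hx'
    simp only [Finset.mem_Icc] at hx hx'
    rw [if_neg]
    intro hc
    apply hrow x (by omega)
    rcases hc.1 with ⟨h, -⟩ | ⟨h, -⟩
    · exact Or.inl h
    · exact Or.inr h


/-- Crossing parities at two vertically/diagonally adjacent non-red tiles agree. -/
private lemma parity_step_down (r : ℤ → ℤ × ℤ) (a b a' : ℤ) (ha' : a' = a ∨ a' = a + 1)
    (N : ℕ) (hadj : ∀ n : ℤ, hexAdj (r n) (r (n + 1)))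
    (hv : ∀ k : ℤ, r k ≠ (a, b)) (hu : ∀ k : ℤ, r k ≠ (a', b - 1))
    (hN1 : (r ((N:ℤ))).2 ≠ b - 1) (hN2 : (r (-(N:ℤ))).2 ≠ b - 1) :
    parityAt r a b N = parityAt r a' (b - 1) N := by
  set g : ℤ → ZMod 2 := fun x => if ((r x).2 = b - 1 ∧ a' ≤ (r x).1) then 1 else 0 with hg
  apply zmod2_eq_of_add_eq_zero
  have h1 : parityAt r a b N + parityAt r a' (b - 1) N
      = ∑ n ∈ Finset.Icc (-(N:ℤ)) ((N:ℤ) - 1),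
          ((if crossP r a b n then (1:ZMod 2) else 0) +
            (if crossP r a' (b - 1) n then 1 else 0)) := by
    unfold parityAt
    rw [Finset.sum_add_distrib]
  have h2 : (∑ n ∈ Finset.Icc (-(N:ℤ)) ((N:ℤ) - 1),
          ((if crossP r a b n then (1:ZMod 2) else 0) +
            (if crossP r a' (b - 1) n then 1 else 0)))
      = ∑ n ∈ Finset.Icc (-(N:ℤ)) ((N:ℤ) - 1), (g (n+1) + g n) := by
    refine Finset.sum_congr rfl (fun n _ => ?_)
    exact cross_point r a b a' n ha' (hadj n)
      (fun hh => hv n (Prod.ext_iff.mpr hh))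
      (fun hh => hv (n+1) (Prod.ext_iff.mpr hh))
      (fun hh => hu n (Prod.ext_iff.mpr hh))
      (fun hh => hu (n+1) (Prod.ext_iff.mpr hh))
  have h3 := telIcc g (2*N) (-(N:ℤ))
  rw [show (-(N:ℤ) + ((2*N : ℕ):ℤ) - 1) = (N:ℤ) - 1 by push_cast; ring,
      show (-(N:ℤ) + ((2*N:ℕ):ℤ)) = (N:ℤ) by push_cast; ring] at h3
  rw [h1, h2, h3]
  simp only [hg]
  rw [if_neg (fun hh => hN1 hh.1), if_neg (fun hh => hN2 hh.1)]
  norm_num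

/-- Crossing parities at two horizontally adjacent non-red tiles agree. -/
private lemma parity_step_right (r : ℤ → ℤ × ℤ) (a b : ℤ) (N : ℕ)
    (hadj : ∀ n : ℤ, hexAdj (r n) (r (n + 1)))
    (hv : ∀ k : ℤ, r k ≠ (a, b)) (hu : ∀ k : ℤ, r k ≠ (a + 1, b)) :
    parityAt r a b N = parityAt r (a + 1) b N := by
  unfold parityAt
  refine Finset.sum_congr rfl (fun n _ => ?_)
  have hiff : crossP r a b n ↔ crossP r (a+1) b n := by
    have ha := hadj n
    simp only [hexAdj, Set.mem_insert_iff, Set.mem_singleton_iff, Prod.mk.injEq] at ha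
    have e1 : ¬((r n).1 = a ∧ (r n).2 = b) := fun hh => hv n (Prod.ext_iff.mpr hh)
    have e2 : ¬((r (n+1)).1 = a ∧ (r (n+1)).2 = b) := fun hh => hv (n+1) (Prod.ext_iff.mpr hh)
    have e3 : ¬((r n).1 = a + 1 ∧ (r n).2 = b) := fun hh => hu n (Prod.ext_iff.mpr hh)
    have e4 : ¬((r (n+1)).1 = a + 1 ∧ (r (n+1)).2 = b) := fun hh => hu (n+1) (Prod.ext_iff.mpr hh)
    simp only [crossP]
    omega
  simp only [hiff]

/-- At a tile to the left of every red tile in the two relevant rows, the parity is `1`. -/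
private lemma parity_one (r : ℤ → ℤ × ℤ) (a b : ℤ) (N : ℕ)
    (hadj : ∀ n : ℤ, hexAdj (r n) (r (n + 1)))
    (hmin : ∀ k : ℤ, ((r k).2 = b - 1 ∨ (r k).2 = b) → a ≤ (r k).1)
    (hN1 : b ≤ (r ((N:ℤ))).2) (hN2 : ¬ b ≤ (r (-(N:ℤ))).2) :
    parityAt r a b N = 1 := by
  set g : ℤ → ZMod 2 := fun x => if b ≤ (r x).2 then 1 else 0 with hg
  have point : ∀ n : ℤ,
      (if crossP r a b n then (1 : ZMod 2) else 0) = g (n+1) + g n := by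
    intro n
    have ha := hadj n
    simp only [hexAdj, Set.mem_insert_iff, Set.mem_singleton_iff, Prod.mk.injEq] at ha
    have m1 := hmin n
    have m2 := hmin (n+1)
    simp only [hg, crossP]
    split_ifs with h1 h2 h3 <;>
      first
        | decide
        | (exfalso; omega)
  have h2 : parityAt r a b N = ∑ n ∈ Finset.Icc (-(N:ℤ)) ((N:ℤ) - 1), (g (n+1) + g n) := by
    unfold parityAt
    exact Finset.sum_congr rfl (fun n _ => point n)
  have h3 := telIcc g (2*N) (-(N:ℤ))
  rw [show (-(N:ℤ) + ((2*N : ℕ):ℤ) - 1) = (N:ℤ) - 1 by push_cast; ring,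
      show (-(N:ℤ) + ((2*N:ℕ):ℤ)) = (N:ℤ) by push_cast; ring] at h3
  rw [h2, h3]
  simp only [hg]
  rw [if_pos hN1, if_neg hN2]
  norm_num

/-- At a tile to the right of every red tile in the two relevant rows, the parity is `0`. -/
private lemma parity_zero (r : ℤ → ℤ × ℤ) (a b : ℤ) (N : ℕ)
    (hmax : ∀ k : ℤ, ((r k).2 = b - 1 ∨ (r k).2 = b) → (r k).1 < a) :
    parityAt r a b N = 0 := by
  unfold parityAt
  apply Finset.sum_eq_zero
  intro n _
  rw [if_neg]
  intro hc
  obtain ⟨h5, h6⟩ := hc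
  have m1 := hmax n
  have m2 := hmax (n+1)
  omega

/-- In Infinite Hex not both players can have winning paths in the same position:
if a position contains a Red winning `Z`-chain then it contains no Blue winning
`Z`-chain. -/
theorem stmt12 (c : ℤ × ℤ → Option Bool) (r : ℤ → ℤ × ℤ)
    (hr : WinningZChain c true r) :
    ¬ ∃ b : ℤ → ℤ × ℤ, WinningZChain c false b := by
  rintro ⟨bp, ⟨⟨hbcol, hbadj⟩, hbwin⟩⟩
  obtain ⟨⟨hrcol, hradj⟩, hrwin⟩ := hr
  -- blue tiles are never red tiles
  have hne : ∀ k m : ℤ, r k ≠ bp m := by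
    intro k m h
    have h1 := hrcol k
    rw [h, hbcol m] at h1
    simp at h1
  -- tail bounds for the red chain
  have redt : ∀ K : ℤ, ∃ N : ℕ, ∀ n : ℤ,
      (((N:ℤ) ≤ n) → K < (r n).1 ∧ K < (r n).2) ∧
      ((n ≤ -(N:ℤ)) → (r n).1 < K ∧ (r n).2 < K) := by
    intro K
    obtain ⟨M, hM⟩ := hrwin (K, K)
    refine ⟨M, fun n => ⟨fun hn => ?_, fun hn => ?_⟩⟩
    · have h := hM n.toNat (by omega)
      rw [if_pos rfl] at h
      rw [show ((n.toNat : ℕ) : ℤ) = n by omega] at h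
      exact h.1
    · have h := hM (-n).toNat (by omega)
      rw [if_pos rfl] at h
      rw [show -(((-n).toNat : ℕ) : ℤ) = n by omega] at h
      exact h.2
  -- for any level b, a window beyond which the red chain is far from rows near b
  have hpick : ∀ b : ℤ, ∃ N : ℕ,
      (∀ n : ℤ, (N:ℤ) ≤ n → b + 4 ≤ (r n).2) ∧
      (∀ n : ℤ, n ≤ -(N:ℤ) → (r n).2 ≤ b - 4) := by
    intro b
    obtain ⟨N1, h1⟩ := redt (b + 4)
    obtain ⟨N2, h2⟩ := redt (b - 3)
    refine ⟨max N1 N2, fun n hn => ?_, fun n hn => ?_⟩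
    · have c1 : ((N1:ℕ):ℤ) ≤ (max N1 N2 : ℕ) := by exact_mod_cast Nat.le_max_left N1 N2
      have := (h1 n).1 (by omega)
      omega
    · have c2 : ((N2:ℕ):ℤ) ≤ (max N1 N2 : ℕ) := by exact_mod_cast Nat.le_max_right N1 N2
      have := (h2 n).2 (by omega)
      omega
  choose Np hNp using hpick
  set Par : ℤ × ℤ → ZMod 2 := fun v => parityAt r v.1 v.2 (Np v.2) with hParDef
  -- rows avoidance for the chosen windows
  have hrowNp : ∀ b : ℤ, ∀ n : ℤ,
      (((Np b : ℕ):ℤ) ≤ n ∨ n ≤ -((Np b : ℕ):ℤ)) → ¬((r n).2 = b - 1 ∨ (r n).2 = b) := by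
    intro b n hn
    rcases hn with h | h
    · have := (hNp b).1 n h; omega
    · have := (hNp b).2 n h; omega
  have stab : ∀ (a b : ℤ) (L : ℕ), Np b ≤ L →
      parityAt r a b (Np b) = parityAt r a b L := by
    intro a b L hL
    exact parity_stab r a b (Np b) L hL (hrowNp b)
  -- parity agrees across a horizontal edge
  have helperH : ∀ a b : ℤ, (∀ k, r k ≠ (a, b)) → (∀ k, r k ≠ (a + 1, b)) →
      Par (a, b) = Par (a + 1, b) := by
    intro a b hv hu
    exact parity_step_right r a b (Np b) hradj hv hu
  -- parity agrees across a vertical / diagonal edge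
  have helperD : ∀ a b a' : ℤ, (a' = a ∨ a' = a + 1) →
      (∀ k, r k ≠ (a, b)) → (∀ k, r k ≠ (a', b - 1)) →
      Par (a, b) = Par (a', b - 1) := by
    intro a b a' ha' hv hu
    have hL1 : Np b ≤ max (Np b) (Np (b - 1)) := le_max_left _ _
    have hL2 : Np (b - 1) ≤ max (Np b) (Np (b - 1)) := le_max_right _ _
    set L : ℕ := max (Np b) (Np (b - 1)) with hLdef
    have c1 : ((Np b : ℕ):ℤ) ≤ (L:ℤ) := by exact_mod_cast hL1
    have e1 : (r ((L:ℕ):ℤ)).2 ≠ b - 1 := by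
      have := (hNp b).1 ((L:ℕ):ℤ) (by omega)
      omega
    have e2 : (r (-((L:ℕ):ℤ))).2 ≠ b - 1 := by
      have := (hNp b).2 (-((L:ℕ):ℤ)) (by omega)
      omega
    calc Par (a, b) = parityAt r a b L := stab a b L hL1
      _ = parityAt r a' (b - 1) L :=
          parity_step_down r a b a' ha' L hradj hv hu e1 e2
      _ = Par (a', b - 1) := (stab a' (b - 1) L hL2).symm
  -- parity is constant along any hex edge between non-red tiles
  have key : ∀ u v : ℤ × ℤ, hexAdj u v → (∀ k, r k ≠ u) → (∀ k, r k ≠ v) →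
      Par u = Par v := by
    intro u v huv hu hv
    simp only [hexAdj, Set.mem_insert_iff, Set.mem_singleton_iff, Prod.mk.injEq] at huv
    rcases huv with ⟨h1, h2⟩ | ⟨h1, h2⟩ | ⟨h1, h2⟩ | ⟨h1, h2⟩ | ⟨h1, h2⟩ | ⟨h1, h2⟩
    · -- u = v + (1,0)
      have h3 : u = (v.1 + 1, v.2) := Prod.ext_iff.mpr ⟨by omega, by omega⟩
      rw [h3]
      exact (helperH v.1 v.2 hv (h3 ▸ hu)).symm
    · -- u = v + (-1,0)
      have h3 : v = (u.1 + 1, u.2) := Prod.ext_iff.mpr ⟨by omega, by omega⟩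
      rw [h3]
      exact helperH u.1 u.2 hu (h3 ▸ hv)
    · -- u = v + (0,1)
      have h3 : v = (u.1, u.2 - 1) := Prod.ext_iff.mpr ⟨by omega, by omega⟩
      rw [h3]
      exact helperD u.1 u.2 u.1 (Or.inl rfl) hu (h3 ▸ hv)
    · -- u = v + (0,-1)
      have h3 : u = (v.1, v.2 - 1) := Prod.ext_iff.mpr ⟨by omega, by omega⟩
      rw [h3]
      exact (helperD v.1 v.2 v.1 (Or.inl rfl) hv (h3 ▸ hu)).symm
    · -- u = v + (1,-1)
      have h3 : u = (v.1 + 1, v.2 - 1) := Prod.ext_iff.mpr ⟨by omega, by omega⟩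
      rw [h3]
      exact (helperD v.1 v.2 (v.1 + 1) (Or.inr rfl) hv (h3 ▸ hu)).symm
    · -- u = v + (-1,1)
      have h3 : v = (u.1 + 1, u.2 - 1) := Prod.ext_iff.mpr ⟨by omega, by omega⟩
      rw [h3]
      exact helperD u.1 u.2 (u.1 + 1) (Or.inr rfl) hu (h3 ▸ hv)
  -- parity is constant along the blue chain
  have const : ∀ m1 m2 : ℤ, m1 ≤ m2 → Par (bp m1) = Par (bp m2) := by
    intro m1 m2 h
    exact Int.le_induction (motive := fun k _ => Par (bp m1) = Par (bp k)) rfl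
      (fun n _ ih => ih.trans
        (key (bp n) (bp (n + 1)) (hbadj n) (fun k => hne k n) (fun k => hne k (n + 1)))) m2 h
  -- a bound on the red chain inside the base window
  obtain ⟨N0, hN0⟩ := redt 0
  set C : ℕ := (Finset.Icc (-(N0:ℤ)) ((N0:ℤ))).sup
      (fun n => (r n).1.natAbs ⊔ (r n).2.natAbs) with hCdef
  have hC : ∀ n : ℤ, -(N0:ℤ) ≤ n → n ≤ (N0:ℤ) →
      (r n).1.natAbs ≤ C ∧ (r n).2.natAbs ≤ C := by
    intro n hn1 hn2
    have hmem : n ∈ Finset.Icc (-(N0:ℤ)) ((N0:ℤ)) := Finset.mem_Icc.mpr ⟨hn1, hn2⟩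
    have := Finset.le_sup (f := fun n => (r n).1.natAbs ⊔ (r n).2.natAbs) hmem
    exact ⟨le_trans le_sup_left this, le_trans le_sup_right this⟩
  -- far NW and far SE blue tiles
  obtain ⟨M1, hM1⟩ := hbwin (0, (C:ℤ) + 2)
  obtain ⟨M2, hM2⟩ := hbwin (0, -((C:ℤ) + 2))
  set m0 : ℕ := max M1 M2 with hm0def
  have hv1 := hM1 m0 (le_max_left _ _)
  have hv2 := hM2 m0 (le_max_right _ _)
  rw [if_neg Bool.false_ne_true] at hv1 hv2
  -- v := bp m0 is far NW ; v' := bp (-m0) is far SE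
  have hvNW1 : (bp (m0:ℤ)).1 < 0 := hv1.1.1
  have hvNW2 : (C:ℤ) + 2 < (bp (m0:ℤ)).2 := hv1.1.2
  have hvSE1 : 0 < (bp (-(m0:ℤ))).1 := hv1.2.1
  have hvSE2 : (bp (-(m0:ℤ))).2 < -((C:ℤ) + 2) := hv2.2.2
  -- parity at the far NW blue tile is 1
  have hone : Par (bp (m0:ℤ)) = 1 := by
    set v := bp (m0:ℤ) with hvdef
    have hmin : ∀ k : ℤ, ((r k).2 = v.2 - 1 ∨ (r k).2 = v.2) → v.1 ≤ (r k).1 := by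
      intro k hk
      by_cases hk1 : (N0:ℤ) ≤ k
      · have := (hN0 k).1 hk1
        omega
      · by_cases hk2 : k ≤ -(N0:ℤ)
        · have := (hN0 k).2 hk2
          omega
        · have hw := hC k (by omega) (by omega)
          omega
    have e1 : v.2 ≤ (r ((Np v.2 : ℕ):ℤ)).2 := by
      have := (hNp v.2).1 ((Np v.2 : ℕ):ℤ) le_rfl
      omega
    have e2 : ¬ v.2 ≤ (r (-((Np v.2 : ℕ):ℤ))).2 := by
      have := (hNp v.2).2 (-((Np v.2 : ℕ):ℤ)) le_rfl
      omega
    exact parity_one r v.1 v.2 (Np v.2) hradj hmin e1 e2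
  -- parity at the far SE blue tile is 0
  have hzero : Par (bp (-(m0:ℤ))) = 0 := by
    set v := bp (-(m0:ℤ)) with hvdef
    have hmax : ∀ k : ℤ, ((r k).2 = v.2 - 1 ∨ (r k).2 = v.2) → (r k).1 < v.1 := by
      intro k hk
      by_cases hk1 : (N0:ℤ) ≤ k
      · have := (hN0 k).1 hk1
        omega
      · by_cases hk2 : k ≤ -(N0:ℤ)
        · have := (hN0 k).2 hk2
          omega
        · have hw := hC k (by omega) (by omega)
          omega
    exact parity_zero r v.1 v.2 (Np v.2) hmax
  have : (0 : ZMod 2) = 1 := by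
    rw [← hzero, ← hone]
    exact const (-(m0:ℤ)) (m0:ℤ) (by omega)
  exact absurd this (by decide)
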